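/- arXiv:2312.04725 — 4 statements merged into one kernel-verified Lean document; each statement's English description precedes it below -/
import Mathlib

section
/- Let X_1, ..., X_d be complex numbers with |X_1| + ... + |X_d| < 1 and let s be a complex number. Then (1 + X_1 + ... + X_d)^{-s} = Σ over multi-indices k = (k_1,...,k_d) ∈ ℕ_0^d of binom(-s, |k|) · multinomial(|k|; k) · X_1^{k_1} ⋯ X_d^{k_d}, where |k| = k_1 + ... + k_d. -/
open Finset

/-- Generalized binomial coefficient `binom(s, n) = s(s-1)⋯(s-n+1)/n!` for complex `s`. -/
noncomputable def cbinom (s : ℂ) (n : ℕ) : ℂ :=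
  (∏ i ∈ Finset.range n, (s - i)) / (n.factorial : ℂ)

open FormalMultilinearSeries

lemma cbinom_zero (a : ℂ) : cbinom a 0 = 1 := by simp [cbinom]

lemma cbinom_succ (a : ℂ) (n : ℕ) :
    ((n : ℂ) + 1) * cbinom a (n + 1) = (a - n) * cbinom a n := by
  have h1 : ((n.factorial : ℂ)) ≠ 0 := Nat.cast_ne_zero.mpr n.factorial_ne_zero
  have h2 : ((n : ℂ) + 1) ≠ 0 := Nat.cast_add_one_ne_zero n
  rw [cbinom, cbinom, prod_range_succ, Nat.factorial_succ]
  push_cast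
  field_simp

lemma cbinom_radius (a : ℂ) : 1 ≤ (ofScalars ℂ (cbinom a)).radius := by
  by_cases h : ∀ n, cbinom a n ≠ 0
  · have hrat : Filter.Tendsto (fun n : ℕ ↦ ‖cbinom a n.succ‖ / ‖cbinom a n‖)
        Filter.atTop (nhds ((1 : NNReal) : ℝ)) := by
      have he : ∀ n : ℕ, ‖cbinom a n.succ‖ / ‖cbinom a n‖ = ‖(a + 1) / ((n : ℂ) + 1) - 1‖ := by
        intro n
        have h2 : ((n : ℂ) + 1) ≠ 0 := Nat.cast_add_one_ne_zero n
        have hcn : cbinom a n ≠ 0 := h n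
        have : cbinom a n.succ / cbinom a n = (a + 1) / ((n : ℂ) + 1) - 1 := by
          have h3 := cbinom_succ a n
          field_simp
          linear_combination h3
        rw [← norm_div, this]
      simp only [he]
      have hn0 : Filter.Tendsto (fun n : ℕ ↦ ‖(a + 1) / ((n : ℂ) + 1)‖)
          Filter.atTop (nhds 0) := by
        have heq : ∀ n : ℕ, ‖(a + 1) / ((n : ℂ) + 1)‖ = ‖a + 1‖ * (1 / ((n : ℝ) + 1)) := by
          intro n
          rw [norm_div, mul_one_div]
          congr 1
          have : ((n : ℂ) + 1) = ((n + 1 : ℕ) : ℂ) := by push_cast; ring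
          rw [this, Complex.norm_natCast]
          push_cast; ring
        simp only [heq]
        simpa using (tendsto_one_div_add_atTop_nhds_zero_nat).const_mul ‖a + 1‖
      have h0 : Filter.Tendsto (fun n : ℕ ↦ (a + 1) / ((n : ℂ) + 1) - 1)
          Filter.atTop (nhds (0 - 1)) :=
        (tendsto_zero_iff_norm_tendsto_zero.mpr hn0).sub_const 1
      have := h0.norm
      simpa using this
    have := inv_le_ofScalars_radius_of_tendsto ℂ (cbinom a) one_ne_zero hrat
    simpa using this
  · push_neg at h
    obtain ⟨n, hn⟩ := h
    have hz : ∀ m, cbinom a (m + n) = 0 := by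
      intro m
      induction m with
      | zero => simpa using hn
      | succ k ih =>
        have h2 := cbinom_succ a (k + n)
        have h3 : ((k + n : ℕ) : ℂ) + 1 ≠ 0 := Nat.cast_add_one_ne_zero _
        rw [ih, mul_zero] at h2
        rcases mul_eq_zero.mp h2 with h4 | h4
        · exact absurd h4 h3
        · rw [show k + 1 + n = k + n + 1 by ring]
          exact h4
    have : (ofScalars ℂ (cbinom a)).radius = ⊤ :=
      FormalMultilinearSeries.radius_eq_top_of_forall_image_add_eq_zero _ n
        (fun m ↦ ofScalars_eq_zero_of_scalar_zero ℂ (hz m))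
    simp [this]

lemma hasSum_cbinom (a : ℂ) {z : ℂ} (hz : ‖z‖ < 1) :
    HasSum (fun n ↦ cbinom a n * z ^ n) ((1 + z) ^ a) := by
  set p := ofScalars ℂ (cbinom a) with hp
  set f := p.sum with hfdef
  have hpos : (0 : ENNReal) < p.radius := lt_of_lt_of_le zero_lt_one (cbinom_radius a)
  have hball : HasFPowerSeriesOnBall f p 0 1 :=
    (p.hasFPowerSeriesOnBall hpos).mono zero_lt_one (cbinom_radius a)
  have hmem : ∀ {w : ℂ}, ‖w‖ < 1 → w ∈ Metric.eball (0 : ℂ) 1 := by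
    intro w hw
    rw [Metric.mem_eball, edist_zero_right, ← ofReal_norm]
    exact ENNReal.ofReal_lt_one.mpr hw
  have hfsum : ∀ {w : ℂ}, ‖w‖ < 1 → HasSum (fun n : ℕ ↦ cbinom a n * w ^ n) (f w) := by
    intro w hw
    have h0 := hball.hasSum (hmem hw)
    rw [zero_add] at h0
    have he : (fun n : ℕ ↦ p n fun _ ↦ w) = fun n : ℕ ↦ cbinom a n * w ^ n := by
      funext n
      rw [hp, ofScalars_apply_eq, smul_eq_mul]
    rwa [he] at h0
  have hderiv_sum : ∀ {w : ℂ}, ‖w‖ < 1 →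
      HasSum (fun n : ℕ ↦ ((n : ℂ) + 1) * cbinom a (n + 1) * w ^ n) (deriv f w) := by
    intro w hw
    rcases eq_or_ne w 0 with rfl | hw0
    · have hd0 : deriv f 0 = p.coeff 1 := hball.hasFPowerSeriesAt.deriv
      have hc : p.coeff 1 = cbinom a 1 := by
        rw [FormalMultilinearSeries.coeff, hp]
        rw [show (1 : Fin 1 → ℂ) = fun _ ↦ (1:ℂ) from rfl, ofScalars_apply_eq]
        simp
      have h1 : HasSum (fun n : ℕ ↦ ((n : ℂ) + 1) * cbinom a (n + 1) * (0:ℂ) ^ n)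
          ((((0:ℕ) : ℂ) + 1) * cbinom a (0 + 1) * (0:ℂ) ^ 0) :=
        hasSum_single 0 (fun b hb ↦ by simp [zero_pow hb])
      have hv : deriv f 0 = (((0:ℕ) : ℂ) + 1) * cbinom a (0 + 1) * (0:ℂ) ^ 0 := by
        rw [hd0, hc]; simp
      rw [hv]
      exact h1
    · have hd := hball.fderiv
      have hsum := (hd.hasSum (hmem hw)).mapL (ContinuousLinearMap.apply ℂ ℂ w)
      simp only [zero_add, ContinuousLinearMap.apply_apply] at hsum
      have hterm : (fun n : ℕ ↦ (p.derivSeries n fun _ ↦ w) w)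
          = fun n : ℕ ↦ (((n : ℂ) + 1) * cbinom a (n + 1) * w ^ n) * w := by
        funext n
        rw [p.derivSeries_apply_diag, hp]
        rw [ofScalars_apply_eq]
        simp only [smul_eq_mul, nsmul_eq_mul]
        push_cast
        ring
      have hval : (fderiv ℂ f w) w = deriv f w * w :=
        calc (fderiv ℂ f w) w = (fderiv ℂ f w) (w • (1:ℂ)) := by rw [smul_eq_mul, mul_one]
        _ = w • (fderiv ℂ f w) (1:ℂ) := map_smul _ _ _
        _ = deriv f w * w := by rw [fderiv_apply_one_eq_deriv, smul_eq_mul]; ring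
      rw [hterm, hval] at hsum
      have := hsum.mul_right w⁻¹
      simpa [mul_assoc, mul_inv_cancel₀ hw0] using this
  have ode : ∀ {w : ℂ}, ‖w‖ < 1 → (1 + w) * deriv f w = a * f w := by
    intro w hw
    have h1 := hderiv_sum hw
    have h1' : HasSum (fun n : ℕ ↦ (a - n) * cbinom a n * w ^ n) (deriv f w) := by
      have he : (fun n : ℕ ↦ ((n : ℂ) + 1) * cbinom a (n + 1) * w ^ n)
          = fun n : ℕ ↦ (a - n) * cbinom a n * w ^ n := by
        funext n
        rw [cbinom_succ]
      rwa [he] at h1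
    have h2 : HasSum (fun n : ℕ ↦ ((n + 1 : ℕ) : ℂ) * cbinom a (n + 1) * w ^ (n + 1))
        (w * deriv f w) := by
      have := h1.mul_left w
      have he : (fun n : ℕ ↦ w * (((n : ℂ) + 1) * cbinom a (n + 1) * w ^ n))
          = fun n : ℕ ↦ ((n + 1 : ℕ) : ℂ) * cbinom a (n + 1) * w ^ (n + 1) := by
        funext n; push_cast; ring
      rwa [he] at this
    have h2' : HasSum (fun n : ℕ ↦ (n : ℂ) * cbinom a n * w ^ n) (w * deriv f w) := by
      have h5 := (hasSum_nat_add_iff (f := fun n : ℕ ↦ (n : ℂ) * cbinom a n * w ^ n) 1).mp h2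
      simpa using h5
    have h3 := h1'.add h2'
    have h4 := (hfsum hw).mul_left a
    have he : (fun n : ℕ ↦ (a - n) * cbinom a n * w ^ n + (n : ℂ) * cbinom a n * w ^ n)
        = fun n : ℕ ↦ a * (cbinom a n * w ^ n) := by
      funext n; ring
    rw [he] at h3
    have := h3.unique h4
    linear_combination this
  have hslit : ∀ {w : ℂ}, ‖w‖ < 1 → 1 + w ∈ Complex.slitPlane := by
    intro w hw
    rw [Complex.mem_slitPlane_iff]
    left
    have h1 : |w.re| ≤ ‖w‖ := Complex.abs_re_le_norm w
    have h2 : (1 + w).re = 1 + w.re := by simp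
    rw [h2]
    cases abs_le.mp h1 with
    | intro hl hr => linarith
  have hne : ∀ {w : ℂ}, ‖w‖ < 1 → (1 + w) ≠ 0 :=
    fun hw ↦ Complex.slitPlane_ne_zero (hslit hw)
  -- the function φ = f * (1+·)^(-a) has zero derivative on the ball
  have hder : ∀ w ∈ Metric.ball (0:ℂ) 1, HasDerivAt (fun u ↦ f u * (1 + u) ^ (-a)) 0 w := by
    intro w hw
    rw [Metric.mem_ball, dist_zero_right] at hw
    have hd1 : HasDerivAt f (deriv f w) w :=
      (hball.differentiableOn.differentiableAt
        (EMetric.isOpen_ball.mem_nhds (hmem hw))).hasDerivAt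
    have hd2 : HasDerivAt (fun u : ℂ ↦ (1 + u) ^ (-a))
        (-a * (1 + w) ^ (-a - 1) * 1) w :=
      HasDerivAt.cpow_const ((hasDerivAt_id w).const_add 1) (hslit hw)
    have hd := hd1.mul hd2
    have hkey : (1 + w) ^ (-a) = (1 + w) ^ (-a - 1) * (1 + w) := by
      have h6 := Complex.cpow_add (-a - 1) 1 (hne hw)
      rw [Complex.cpow_one] at h6
      rw [show (-a - 1 + 1 : ℂ) = -a by ring] at h6
      exact h6
    have hzero : deriv f w * (1 + w) ^ (-a) + f w * (-a * (1 + w) ^ (-a - 1) * 1) = 0 := by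
      rw [hkey]
      linear_combination (1 + w) ^ (-a - 1) * (ode hw)
    rwa [hzero] at hd
  have hconst : f z * (1 + z) ^ (-a) = 1 := by
    set φ := fun u : ℂ ↦ f u * (1 + u) ^ (-a) with hφ
    have hdiff : DifferentiableOn ℂ φ (Metric.ball (0:ℂ) 1) :=
      fun w hw ↦ ((hder w hw).differentiableAt).differentiableWithinAt
    have hzero : ∀ w ∈ Metric.ball (0:ℂ) 1,
        fderivWithin ℂ φ (Metric.ball (0:ℂ) 1) w = 0 := by
      intro w hw
      rw [fderivWithin_of_isOpen Metric.isOpen_ball hw, (hder w hw).hasFDerivAt.fderiv]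
      ext
      simp
    have hz0 : (0:ℂ) ∈ Metric.ball (0:ℂ) 1 := by simp
    have hzz : z ∈ Metric.ball (0:ℂ) 1 := by simpa [Metric.mem_ball, dist_zero_right] using hz
    have := Convex.is_const_of_fderivWithin_eq_zero (convex_ball 0 1) hdiff hzero hzz hz0
    have hf0 : f 0 = 1 := by
      have hs0 := hfsum (by norm_num : ‖(0:ℂ)‖ < 1)
      have h1 : HasSum (fun n : ℕ ↦ cbinom a n * (0:ℂ) ^ n) (cbinom a 0 * (0:ℂ) ^ 0) :=
        hasSum_single 0 (fun b hb ↦ by simp [zero_pow hb])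
      have := hs0.unique h1
      rw [this, cbinom_zero]
      simp
    rw [hφ] at this
    simpa [hf0] using this
  have hfz : f z = (1 + z) ^ a := by
    have hpa : (1 + z) ^ a ≠ 0 := by
      rw [Ne, Complex.cpow_eq_zero_iff]
      push_neg
      intro h
      exact absurd h (hne hz)
    rw [Complex.cpow_neg] at hconst
    field_simp at hconst
    exact hconst
  rw [← hfz]
  exact hfsum hz

/-- Multinomial expansion of `(1 + X_1 + ... + X_d)^{-s}` for `|X_1| + ... + |X_d| < 1`:
the series over multi-indices `k ∈ ℕ^d` of
`binom(-s,|k|) · multinomial(|k|;k) · X_1^{k_1}⋯X_d^{k_d}` converges absolutely to it. -/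
theorem cpow_neg_eq_tsum_multinomial (d : ℕ) (X : Fin d → ℂ)
    (hX : (∑ i, ‖X i‖) < 1) (s : ℂ) :
    Summable (fun k : Fin d → ℕ =>
      ‖cbinom (-s) (∑ i, k i) * (Nat.multinomial Finset.univ k : ℂ) * ∏ i, X i ^ k i‖) ∧
    HasSum (fun k : Fin d → ℕ =>
        cbinom (-s) (∑ i, k i) * (Nat.multinomial Finset.univ k : ℂ) * ∏ i, X i ^ k i)
      ((1 + ∑ i, X i) ^ (-s)) := by
  classical
  set a := -s with ha
  set t := ∑ i, X i with ht
  set r := ∑ i, ‖X i‖ with hr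
  set g : (Fin d → ℕ) → ℂ :=
    fun k ↦ cbinom a (∑ i, k i) * (Nat.multinomial Finset.univ k : ℂ) * ∏ i, X i ^ k i with hg
  have hr0 : 0 ≤ r := Finset.sum_nonneg fun i _ ↦ norm_nonneg _
  have htr : ‖t‖ < 1 := lt_of_le_of_lt (norm_sum_le _ _) hX
  have hsum1 : Summable (fun n : ℕ ↦ ‖cbinom a n‖ * r ^ n) := by
    have hrlt : ((r.toNNReal : NNReal) : ENNReal) < (ofScalars ℂ (cbinom a)).radius := by
      refine lt_of_lt_of_le ?_ (cbinom_radius a)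
      rw [← ENNReal.coe_one, ENNReal.coe_lt_coe]
      exact Real.toNNReal_lt_one.mpr hX
    have := (ofScalars ℂ (cbinom a)).summable_norm_mul_pow hrlt
    simp only [ofScalars_norm] at this
    rwa [Real.coe_toNNReal r hr0] at this
  have hnorm : ∀ k : Fin d → ℕ, ‖g k‖ = ‖cbinom a (∑ i, k i)‖ *
      ((Nat.multinomial Finset.univ k : ℝ) * ∏ i, ‖X i‖ ^ k i) := by
    intro k
    rw [hg]
    simp only [norm_mul, Complex.norm_natCast, norm_prod, norm_pow, mul_assoc]
  have hfiber_norm : ∀ n : ℕ, ∑ k ∈ piAntidiag (univ : Finset (Fin d)) n, ‖g k‖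
      = ‖cbinom a n‖ * r ^ n := by
    intro n
    rw [hr, Finset.sum_pow_eq_sum_piAntidiag univ (fun i ↦ ‖X i‖) n, Finset.mul_sum]
    refine Finset.sum_congr rfl fun k hk ↦ ?_
    have hks : ∑ i, k i = n := (mem_piAntidiag.mp hk).1
    rw [hnorm k, hks]
  have hfiber_val : ∀ n : ℕ, ∑ k ∈ piAntidiag (univ : Finset (Fin d)) n, g k
      = cbinom a n * t ^ n := by
    intro n
    rw [ht, Finset.sum_pow_eq_sum_piAntidiag univ X n, Finset.mul_sum]
    refine Finset.sum_congr rfl fun k hk ↦ ?_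
    have hks : ∑ i, k i = n := (mem_piAntidiag.mp hk).1
    rw [hg]
    simp only [hks, mul_assoc]
  have hN : Summable (fun k : Fin d → ℕ ↦ ‖g k‖) := by
    refine summable_of_sum_le (c := ∑' n : ℕ, ‖cbinom a n‖ * r ^ n)
      (fun k ↦ norm_nonneg (g k)) (fun u ↦ ?_)
    set M := u.sup (fun k ↦ ∑ i, k i) with hM
    have hsub : u ⊆ (range (M + 1)).biUnion (fun n ↦ piAntidiag (univ : Finset (Fin d)) n) := by
      intro k hk
      rw [Finset.mem_biUnion]
      exact ⟨∑ i, k i, Finset.mem_range.mpr (Nat.lt_succ_of_le (Finset.le_sup hk)),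
        mem_piAntidiag.mpr ⟨rfl, fun i _ ↦ Finset.mem_univ i⟩⟩
    have hdisj : (↑(range (M + 1)) : Set ℕ).PairwiseDisjoint
        (fun n ↦ piAntidiag (univ : Finset (Fin d)) n) := by
      intro m _ n _ hmn
      rw [Function.onFun, Finset.disjoint_left]
      intro k hkm hkn
      exact hmn ((mem_piAntidiag.mp hkm).1.symm.trans (mem_piAntidiag.mp hkn).1)
    calc ∑ k ∈ u, ‖g k‖
        ≤ ∑ k ∈ (range (M + 1)).biUnion (fun n ↦ piAntidiag (univ : Finset (Fin d)) n), ‖g k‖ :=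
          Finset.sum_le_sum_of_subset_of_nonneg hsub (fun k _ _ ↦ norm_nonneg _)
      _ = ∑ n ∈ range (M + 1), ∑ k ∈ piAntidiag (univ : Finset (Fin d)) n, ‖g k‖ :=
          Finset.sum_biUnion hdisj
      _ = ∑ n ∈ range (M + 1), ‖cbinom a n‖ * r ^ n :=
          Finset.sum_congr rfl (fun n _ ↦ hfiber_norm n)
      _ ≤ ∑' n : ℕ, ‖cbinom a n‖ * r ^ n :=
          Summable.sum_le_tsum (range (M + 1)) (fun n _ ↦ by positivity) hsum1
  have hgsum : Summable g := hN.of_norm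
  refine ⟨hN, ?_⟩
  have htf := hgsum.hasSum.tsum_fiberwise (fun k ↦ ∑ i, k i)
  have hfib : ∀ n : ℕ, ∑' k : (fun k : Fin d → ℕ ↦ ∑ i, k i) ⁻¹' {n}, g ↑k
      = cbinom a n * t ^ n := by
    intro n
    have hset : (fun k : Fin d → ℕ ↦ ∑ i, k i) ⁻¹' {n}
        = ↑(piAntidiag (univ : Finset (Fin d)) n) := by
      ext k
      simp [mem_piAntidiag]
    rw [hset, Finset.tsum_subtype', hfiber_val n]
  rw [funext hfib] at htf
  have huniq : ∑' k, g k = (1 + t) ^ a := htf.unique (hasSum_cbinom a htr)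
  exact hgsum.hasSum_iff.mpr huniq
end

section
/- Let θ > 0 be a real number, ν a complex number with Re(ν) > 0, and s = σ + iτ a complex number. Then |∫_θ^∞ e^{-νy} y^{s-1} dy| ≤ 2^σ e^{-Re(ν)θ/2} ∫_{θ/2}^∞ e^{-Re(ν)y} y^{σ-1} dy. -/
open MeasureTheory

lemma exp_neg_mul_rpow_integrableOn_Ioi {a : ℝ} (ha : 0 < a) (c : ℝ) {t : ℝ} (ht : 0 < t) :
    IntegrableOn (fun y : ℝ => Real.exp (-a * y) * y ^ c) (Set.Ioi t) := by
  apply integrable_of_isBigO_exp_neg (b := a / 2) (by positivity)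
  · apply ContinuousOn.mul (Real.continuous_exp.comp (by fun_prop)).continuousOn
    intro y hy
    exact (Real.continuousAt_rpow_const y c (Or.inl (lt_of_lt_of_le ht hy).ne')).continuousWithinAt
  · rw [Asymptotics.isBigO_iff]
    refine ⟨1, ?_⟩
    have h := tendsto_rpow_mul_exp_neg_mul_atTop_nhds_zero c (a / 2) (by positivity)
    filter_upwards [h.eventually (eventually_le_nhds one_pos),
      Filter.eventually_ge_atTop (0 : ℝ)] with y hy hy0
    have hy' : |y ^ c * Real.exp (-(a / 2) * y)| ≤ 1 := by
      rw [abs_of_nonneg (by positivity)]; exact hy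
    have key : Real.exp (-a * y) * y ^ c = (y ^ c * Real.exp (-(a / 2) * y)) *
        Real.exp (-(a / 2) * y) := by
      rw [mul_comm, mul_assoc, ← Real.exp_add]; ring_nf
    rw [Real.norm_eq_abs, Real.norm_eq_abs, key, abs_mul, one_mul]
    exact mul_le_of_le_one_left (abs_nonneg _) hy'

/-- Bound for the generalized incomplete Gamma function:
`|Γ(s,θ,ν)| ≤ 2^σ e^{-Re(ν)θ/2} Γ(σ, θ/2, Re ν)` for `θ > 0`, `Re ν > 0`, `s = σ + iτ`. -/
theorem norm_incompleteGamma_le (θ : ℝ) (hθ : 0 < θ) (ν : ℂ) (hν : 0 < ν.re) (s : ℂ) :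
    ‖∫ y in Set.Ioi θ, Complex.exp (-ν * y) * (y : ℂ) ^ (s - 1)‖ ≤
      (2 : ℝ) ^ s.re * Real.exp (-ν.re * θ / 2) *
        ∫ y in Set.Ioi (θ / 2), Real.exp (-ν.re * y) * y ^ (s.re - 1) := by
  set a := ν.re
  set σ := s.re
  set g : ℝ → ℝ := fun y => Real.exp (-a * y) * y ^ (σ - 1) with hg
  have hint : IntegrableOn g (Set.Ioi (θ / 2)) :=
    exp_neg_mul_rpow_integrableOn_Ioi hν _ (by positivity)
  have hint2 : IntegrableOn (fun y => Real.exp (-a * θ / 2) * 2 ^ (σ - 1) * g (2⁻¹ * y))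
      (Set.Ioi θ) := by
    exact Integrable.const_mul ((integrableOn_Ioi_comp_mul_left_iff g θ
      (by norm_num : (0:ℝ) < 2⁻¹)).mpr (by simpa [inv_mul_eq_div] using hint)) _
  have step1 : ‖∫ y in Set.Ioi θ, Complex.exp (-ν * y) * (y : ℂ) ^ (s - 1)‖ ≤
      ∫ y in Set.Ioi θ, Real.exp (-a * θ / 2) * 2 ^ (σ - 1) * g (2⁻¹ * y) := by
    refine (norm_integral_le_integral_norm _).trans ?_
    apply integral_mono_of_nonneg (Filter.Eventually.of_forall fun y => norm_nonneg _) hint2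
    filter_upwards [ae_restrict_mem measurableSet_Ioi] with y hy
    have hyθ : θ < y := hy
    have hy0 : 0 < y := hθ.trans hyθ
    have hnorm : ‖Complex.exp (-ν * y) * (y : ℂ) ^ (s - 1)‖ =
        Real.exp (-a * y) * y ^ (σ - 1) := by
      rw [norm_mul, Complex.norm_exp,
        Complex.norm_cpow_eq_rpow_re_of_pos hy0]
      simp [Complex.sub_re, σ, a]
    rw [hnorm]
    have hexp : Real.exp (-a * y) ≤ Real.exp (-a * θ / 2) * Real.exp (-a * (2⁻¹ * y)) := by
      rw [← Real.exp_add]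
      apply Real.exp_le_exp.mpr
      nlinarith
    have hrpow : y ^ (σ - 1) = 2 ^ (σ - 1) * (2⁻¹ * y) ^ (σ - 1) := by
      rw [Real.mul_rpow (by norm_num) hy0.le, ← mul_assoc, ← Real.mul_rpow (by norm_num)
        (by norm_num), mul_inv_cancel₀ (by norm_num : (2:ℝ) ≠ 0), Real.one_rpow, one_mul]
    have hb : (0:ℝ) ≤ (2⁻¹ * y) ^ (σ - 1) := Real.rpow_nonneg (by positivity) _
    calc Real.exp (-a * y) * y ^ (σ - 1)
        ≤ (Real.exp (-a * θ / 2) * Real.exp (-a * (2⁻¹ * y))) * y ^ (σ - 1) := by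
          apply mul_le_mul_of_nonneg_right hexp (Real.rpow_nonneg hy0.le _)
      _ = Real.exp (-a * θ / 2) * 2 ^ (σ - 1) * g (2⁻¹ * y) := by
          rw [hg]; dsimp only; rw [hrpow]; ring
  refine step1.trans ?_
  rw [integral_const_mul, integral_comp_mul_left_Ioi g θ (by norm_num : (0:ℝ) < 2⁻¹)]
  rw [smul_eq_mul, inv_inv, inv_mul_eq_div]
  have h2 : Real.exp (-a * θ / 2) * 2 ^ (σ - 1) * (2 * ∫ y in Set.Ioi (θ / 2), g y) =
      (2:ℝ) ^ σ * Real.exp (-a * θ / 2) * ∫ y in Set.Ioi (θ / 2), g y := by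
    have : (2:ℝ) ^ σ = 2 ^ (σ - 1) * 2 := by
      rw [← Real.rpow_add_one (by norm_num : (2:ℝ) ≠ 0)]; ring_nf
    rw [this]; ring
  rw [h2]
end

section
/- Let a, c be complex numbers with positive real part, b a nonnegative integer, and set g(s) = 1/(Γ(as - b) · cs). Then g extends holomorphically near s = 0 with g(0) = (a/c)·(-1)^b·b! and g'(0) = (a²/c)·(-1)^b·b!·(γ - h_b), where γ is the Euler–Mascheroni constant and h_b = Σ_{k=1}^b 1/k is the b-th harmonic number. -/
open Complex Finset

lemma prod_neg_succ (b : ℕ) : ∏ k ∈ Finset.range b, (-((k:ℂ)+1)) = (-1)^b * (b.factorial : ℂ) := by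
  induction b with
  | zero => simp
  | succ b ih => rw [Finset.prod_range_succ, ih, Nat.factorial_succ]; push_cast; ring

lemma prod_neg_succ' (a : ℂ) (b : ℕ) :
    ∏ k ∈ Finset.range b, (a * 0 - ((k:ℂ)+1)) = (-1)^b * (b.factorial : ℂ) := by
  simp only [mul_zero, zero_sub]; exact prod_neg_succ b

lemma hasDerivAt_P (a : ℂ) (b : ℕ) :
    HasDerivAt (fun s : ℂ => ∏ k ∈ Finset.range b, (a * s - ((k:ℂ)+1)))
      (-a * (-1)^b * (b.factorial : ℂ) * ((harmonic b : ℚ) : ℂ)) 0 := by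
  induction b with
  | zero => simpa using hasDerivAt_const (0:ℂ) (1:ℂ)
  | succ b ih =>
    have hlin : HasDerivAt (fun s : ℂ => a * s - ((b:ℂ)+1)) a 0 := by
      simpa using ((hasDerivAt_id (0:ℂ)).const_mul a).sub_const ((b:ℂ)+1)
    have key := ih.mul hlin
    simp only [Finset.prod_range_succ]
    refine key.congr_deriv ?_
    rw [prod_neg_succ' a b, harmonic_succ, Nat.factorial_succ]
    have hb : ((b:ℂ)+1) ≠ 0 := by
      intro h
      have : ((b:ℝ)+1) = 0 := by exact_mod_cast congrArg Complex.re h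
      nlinarith [Nat.cast_nonneg (α := ℝ) b]
    push_cast
    field_simp
    ring

lemma inv_Gamma_sub_nat (b : ℕ) (w : ℂ) (hw : ∀ k ∈ Finset.range b, w - ((k:ℂ)+1) ≠ 0) :
    (Complex.Gamma (w - b))⁻¹ =
      (∏ k ∈ Finset.range b, (w - ((k:ℂ)+1))) * (Complex.Gamma w)⁻¹ := by
  induction b generalizing w with
  | zero => simp
  | succ b ih =>
    have h0 : w - 1 ≠ 0 := by simpa using hw 0 (by simp)
    have h1 : Complex.Gamma w = (w - 1) * Complex.Gamma (w - 1) := by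
      have := Complex.Gamma_add_one (w - 1) h0
      rwa [sub_add_cancel] at this
    have h2 : (Complex.Gamma (w - 1))⁻¹ = (w - 1) * (Complex.Gamma w)⁻¹ := by
      rw [h1, mul_inv, ← mul_assoc, mul_inv_cancel₀ h0, one_mul]
    have h3 : w - ((b:ℂ)+1) = (w - 1) - b := by ring
    have h3' : w - ((b+1 : ℕ) : ℂ) = (w - 1) - b := by push_cast; ring
    have h4 : ∏ k ∈ Finset.range b, (w - 1 - ((k:ℂ)+1)) =
        ∏ k ∈ Finset.range b, (w - ((((k+1):ℕ):ℂ)+1)) :=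
      Finset.prod_congr rfl (fun k _ => by push_cast; ring)
    rw [h3', ih (w - 1) (fun k hk => by
      have h5 := hw (k+1) (Finset.mem_range.mpr (Nat.add_lt_add_right (Finset.mem_range.mp hk) 1))
      push_cast at h5 ⊢
      intro h; apply h5; rw [← h]; ring), h2, h4,
      Finset.prod_range_succ' (fun k : ℕ => w - ((k:ℂ)+1)) b]
    simp only [Nat.cast_zero, zero_add]
    ring

/-- Let `Re a > 0`, `Re c > 0`, `b ∈ ℕ`. The function `s ↦ 1/(Γ(as-b)·cs)` extends
holomorphically near `s = 0` with value `(a/c)·(-1)^b·b!` and derivative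
`(a²/c)·(-1)^b·b!·(γ - h_b)` at `0`. -/
theorem one_div_Gamma_linear_mul_cs_at_zero (a c : ℂ) (ha : 0 < a.re) (hc : 0 < c.re) (b : ℕ) :
    ∃ g : ℂ → ℂ, AnalyticAt ℂ g 0 ∧
      (∀ᶠ s in nhdsWithin (0 : ℂ) {(0 : ℂ)}ᶜ,
        g s = (Complex.Gamma (a * s - b))⁻¹ / (c * s)) ∧
      g 0 = a / c * (-1) ^ b * (b.factorial : ℂ) ∧
      deriv g 0 = a ^ 2 / c * (-1) ^ b * (b.factorial : ℂ) *
        ((Real.eulerMascheroniConstant : ℂ) - ((harmonic b : ℚ) : ℂ)) := by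
  have ha0 : a ≠ 0 := fun h => by simp [h] at ha
  have hc0 : c ≠ 0 := fun h => by simp [h] at hc
  set P : ℂ → ℂ := fun s => ∏ k ∈ Finset.range b, (a * s - ((k:ℂ)+1)) with hP
  have hGinv : HasDerivAt (fun s : ℂ => (Complex.Gamma (a * s + 1))⁻¹)
      (a * (Real.eulerMascheroniConstant : ℂ)) 0 := by
    have hinner : HasDerivAt (fun s : ℂ => a * s + 1) a 0 := by
      simpa using ((hasDerivAt_id (0:ℂ)).const_mul a).add_const 1
    have houter : HasDerivAt (fun z : ℂ => (Complex.Gamma z)⁻¹)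
        ((Real.eulerMascheroniConstant : ℂ)) 1 := by
      have := (Complex.hasDerivAt_Gamma_one).inv (by rw [Complex.Gamma_one]; exact one_ne_zero)
      simp [Complex.Gamma_one] at this
      exact this
    have houter' : HasDerivAt (fun z : ℂ => (Complex.Gamma z)⁻¹)
        ((Real.eulerMascheroniConstant : ℂ)) (a * 0 + 1) := by
      rw [show a * (0:ℂ) + 1 = 1 by ring]; exact houter
    have := houter'.comp 0 hinner
    simp [mul_comm] at this
    exact this
  have hderiv : HasDerivAt (fun s => a / c * (P s * (Complex.Gamma (a * s + 1))⁻¹))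
      (a / c * ((-a * (-1)^b * (b.factorial : ℂ) * ((harmonic b : ℚ) : ℂ)) *
        (Complex.Gamma (a * 0 + 1))⁻¹ + P 0 * (a * (Real.eulerMascheroniConstant : ℂ)))) 0 :=
    ((hasDerivAt_P a b).mul hGinv).const_mul _
  refine ⟨fun s => a / c * (P s * (Complex.Gamma (a * s + 1))⁻¹), ?_, ?_, ?_, ?_⟩
  · apply Differentiable.analyticAt
    apply Differentiable.const_mul
    apply Differentiable.mul
    · exact Differentiable.fun_finset_prod (fun k _ =>
        ((differentiable_id.const_mul a).sub_const _))
    · exact Complex.differentiable_one_div_Gamma.comp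
        ((differentiable_id.const_mul a).add_const 1)
  · have hball : Metric.ball (0:ℂ) (1/(‖a‖+1)) ∈ nhds (0:ℂ) :=
      Metric.ball_mem_nhds _ (by positivity)
    filter_upwards [eventually_mem_nhdsWithin, nhdsWithin_le_nhds hball] with s hs hs'
    have hs0 : s ≠ 0 := hs
    have hnorm : ‖a * s‖ < 1 := by
      rw [norm_mul]
      have hd := Metric.mem_ball.mp hs'
      simp only [dist_zero_right] at hd
      calc ‖a‖ * ‖s‖ ≤ (‖a‖+1) * ‖s‖ := by nlinarith [norm_nonneg s, norm_nonneg a]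
        _ < (‖a‖+1) * (1/(‖a‖+1)) := mul_lt_mul_of_pos_left hd (by positivity)
        _ = 1 := by field_simp
    have has0 : a * s ≠ 0 := mul_ne_zero ha0 hs0
    have hkey := inv_Gamma_sub_nat b (a * s) (fun k _ h => by
      rw [sub_eq_zero] at h
      rw [h] at hnorm
      have hk1 : (1:ℝ) ≤ ‖((k:ℂ)+1)‖ := by
        rw [show ((k:ℂ)+1) = (((k+1):ℕ):ℂ) by push_cast; ring, Complex.norm_natCast]
        exact_mod_cast Nat.one_le_iff_ne_zero.mpr (Nat.succ_ne_zero k)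
      linarith)
    have hstep : (Complex.Gamma (a * s))⁻¹ = (a * s) * (Complex.Gamma (a * s + 1))⁻¹ := by
      rw [Complex.Gamma_add_one _ has0, mul_inv, ← mul_assoc, mul_inv_cancel₀ has0, one_mul]
    have hQG : ∀ Q G : ℂ, a / c * (Q * G) = Q * (a * s * G) / (c * s) := by
      intro Q G; field_simp
    rw [hkey, hstep]
    exact hQG _ _
  · have hP0 : P 0 = (-1)^b * (b.factorial : ℂ) := prod_neg_succ' a b
    show a / c * (P 0 * (Complex.Gamma (a * 0 + 1))⁻¹) = _
    rw [show a * (0:ℂ) + 1 = 1 by ring, Complex.Gamma_one, inv_one, hP0]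
    ring
  · have hP0 : P 0 = (-1)^b * (b.factorial : ℂ) := prod_neg_succ' a b
    rw [hderiv.deriv, hP0, show a * (0:ℂ) + 1 = 1 by ring, Complex.Gamma_one, inv_one]
    ring
end

section
/- Let P ≥ 1 and let w_p = a_p/b_p (p = 1,...,P) be positive rationals with a_p, b_p coprime positive integers, and d_1,...,d_P complex with positive real part. Set w = lcm(a_1,...,a_P)/gcd(b_1,...,b_P) and β_p = w/w_p (each β_p is a positive integer). Then for Re(s) large, ζ^B(R, s, d | w_1,...,w_P) = w^{-s} ∏_{p=1}^P β_p^{R_p} · Σ_{0 ≤ k_1 ≤ β_1 - 1, ..., 0 ≤ k_P ≤ β_P - 1} ζ^B(R, s, ((d_p + k_p)/β_p)_{p=1}^P | 1,...,1). -/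
open Finset

lemma my_ofReal_mul_cpow {r : ℝ} (hr : 0 < r) {z : ℂ} (hz : z ≠ 0) (s : ℂ) :
    ((r : ℂ) * z) ^ s = (r : ℂ) ^ s * z ^ s := by
  have hr' : (r : ℂ) ≠ 0 := by exact_mod_cast hr.ne'
  rw [Complex.cpow_def_of_ne_zero (mul_ne_zero hr' hz),
    Complex.cpow_def_of_ne_zero hr', Complex.cpow_def_of_ne_zero hz,
    Complex.log_ofReal_mul hr hz, Complex.ofReal_log hr.le, add_mul, Complex.exp_add]

lemma my_summable_pi_prod (P : ℕ) (g : ℕ → ℝ) (hg : Summable g) (hg0 : ∀ n, 0 ≤ g n) :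
    Summable (fun n : Fin P → ℕ => ∏ p, g (n p)) := by
  induction P with
  | zero => exact summable_of_finite_support (Set.toFinite _)
  | succ P ih =>
      refine ((Fin.consEquiv (fun _ : Fin (P+1) => ℕ)).summable_iff
        (f := fun n : Fin (P+1) → ℕ => ∏ p, g (n p))).1 ?_
      have heq : ((fun n : Fin (P+1) → ℕ => ∏ p, g (n p)) ∘ ⇑(Fin.consEquiv fun _ => ℕ))
          = fun x : ℕ × (Fin P → ℕ) => g x.1 * ∏ p, g (x.2 p) := by
        funext x
        simp [Fin.consEquiv, Fin.prod_univ_succ]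
      rw [heq]
      exact @Summable.mul_of_nonneg ℕ (Fin P → ℕ) g (fun n => ∏ p, g (n p)) hg ih hg0
        (fun n => Finset.prod_nonneg fun p _ => hg0 _)

lemma my_barnes_summable (P : ℕ) (hP : 1 ≤ P) (R : Fin P → ℕ) (c : Fin P → ℝ)
    (hc : ∀ p, 0 < c p) (d : Fin P → ℂ) (hd : ∀ p, 0 < (d p).re) (s : ℂ)
    (hs : ((∑ p, R p : ℕ) : ℝ) + P < s.re) :
    Summable (fun n : Fin P → ℕ =>
      (∏ p, ((n p : ℂ) + d p) ^ (R p)) * (∑ p, ((c p : ℝ) : ℂ) * ((n p : ℂ) + d p)) ^ (-s)) := by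
  have hPfin : Nonempty (Fin P) := Fin.pos_iff_nonempty.1 hP
  have hPn : (univ : Finset (Fin P)).Nonempty := univ_nonempty
  have hP0 : (0:ℝ) < P := by exact_mod_cast hP
  obtain ⟨σ, hσ⟩ : ∃ x : ℝ, x = s.re := ⟨_, rfl⟩
  obtain ⟨Rs, hRs⟩ : ∃ x : ℕ, x = ∑ p, R p := ⟨_, rfl⟩
  obtain ⟨t, ht⟩ : ∃ x : ℝ, x = σ - Rs := ⟨_, rfl⟩
  have hs' : (Rs:ℝ) + P < σ := by rw [hσ, hRs]; exact hs
  have htP : (P:ℝ) < t := by rw [ht]; linarith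
  have ht0 : 0 < t := lt_trans hP0 htP
  have hσpos : 0 < σ := by have : (0:ℝ) ≤ Rs := Nat.cast_nonneg _; linarith
  obtain ⟨q, hq⟩ : ∃ x : ℝ, x = t / P := ⟨_, rfl⟩
  have hq1 : 1 < q := by rw [hq]; exact (one_lt_div hP0).2 htP
  have hq0 : 0 ≤ q := by linarith
  have hqP : q * (P:ℝ) = t := by rw [hq]; field_simp
  obtain ⟨g, hgdef⟩ : ∃ g : ℕ → ℝ, g = fun n : ℕ => ((n:ℝ)+1) ^ (-q) := ⟨_, rfl⟩
  have hg0 : ∀ n, 0 ≤ g n := fun n => by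
    rw [hgdef]; exact Real.rpow_nonneg (by positivity) _
  have hg : Summable g := by
    have h1 : Summable (fun n : ℕ => (n:ℝ) ^ (-q)) :=
      Real.summable_nat_rpow.2 (by linarith)
    have h2 := h1.comp_injective Nat.succ_injective
    refine h2.congr fun n => ?_
    rw [hgdef]
    simp only [Function.comp]
    push_cast
    norm_num
  obtain ⟨ε, hεpos, hεle⟩ : ∃ ε : ℝ, 0 < ε ∧ ∀ p, ε ≤ c p * min (d p).re 1 := by
    refine ⟨univ.inf' hPn (fun p => c p * min (d p).re 1), ?_, fun p => inf'_le _ (mem_univ p)⟩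
    rw [Finset.lt_inf'_iff]
    exact fun p _ => mul_pos (hc p) (lt_min (hd p) one_pos)
  obtain ⟨A, hA1, hAle⟩ : ∃ A : ℝ, 1 ≤ A ∧ ∀ p, 1 + ‖d p‖ ≤ A := by
    refine ⟨univ.sup' hPn (fun p => 1 + ‖d p‖), ?_,
      fun p => le_sup' (fun p => 1 + ‖d p‖) (mem_univ p)⟩
    obtain ⟨p⟩ := hPfin
    have := le_sup' (fun p => 1 + ‖d p‖) (mem_univ p)
    have h2 : (0:ℝ) ≤ ‖d p‖ := norm_nonneg _
    linarith
  have hA0 : (0:ℝ) ≤ A := by linarith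
  obtain ⟨E, hEpos, hEdef⟩ : ∃ E : ℝ, 0 < E ∧ E = Real.exp (Real.pi * |s.im|) :=
    ⟨_, Real.exp_pos _, rfl⟩
  obtain ⟨C, hC0, hCdef⟩ : ∃ C : ℝ, 0 ≤ C ∧ C = A ^ Rs * ε ^ (-σ) * E := by
    refine ⟨_, ?_, rfl⟩
    have h1 : (0:ℝ) < ε ^ (-σ) := Real.rpow_pos_of_pos hεpos _
    positivity
  apply Summable.of_norm_bounded (g := fun n : Fin P → ℕ => C * ∏ p, g (n p))
    ((my_summable_pi_prod P g hg hg0).mul_left C)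
  intro n
  have hxp : ∀ p, (0:ℝ) < (n p : ℝ) + 1 := fun p => by positivity
  obtain ⟨N, hNdef⟩ : ∃ x : ℝ, x = ∑ p, ((n p : ℝ) + 1) := ⟨_, rfl⟩
  have hN1 : ∀ p, (n p : ℝ) + 1 ≤ N := fun p => by
    rw [hNdef]
    exact single_le_sum (f := fun p => ((n p:ℝ)+1)) (fun p _ => by positivity) (mem_univ p)
  have hNpos : 0 < N := by
    rw [hNdef]; exact sum_pos (fun p _ => by positivity) hPn
  obtain ⟨S, hSdef⟩ : ∃ x : ℂ, x = ∑ p, ((c p : ℝ) : ℂ) * ((n p : ℂ) + d p) := ⟨_, rfl⟩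
  have hSre : S.re = ∑ p, c p * ((n p : ℝ) + (d p).re) := by
    rw [hSdef, Complex.re_sum]
    refine Finset.sum_congr rfl fun p _ => ?_
    rw [Complex.re_ofReal_mul]
    simp
  have hSreN : ε * N ≤ S.re := by
    rw [hSre, hNdef, Finset.mul_sum]
    refine Finset.sum_le_sum fun p _ => ?_
    have h1 := hεle p
    have h2 : min (d p).re 1 ≤ 1 := min_le_right _ _
    have h3 : min (d p).re 1 ≤ (d p).re := min_le_left _ _
    have h4 : (0:ℝ) ≤ (n p : ℝ) := Nat.cast_nonneg _
    calc ε * ((n p:ℝ) + 1) ≤ (c p * min (d p).re 1) * ((n p:ℝ) + 1) :=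
          mul_le_mul_of_nonneg_right h1 (by positivity)
      _ = c p * (min (d p).re 1 * (n p:ℝ) + min (d p).re 1) := by ring
      _ ≤ c p * ((n p:ℝ) + (d p).re) := by
          refine mul_le_mul_of_nonneg_left ?_ (hc p).le
          have : min (d p).re 1 * (n p:ℝ) ≤ (n p:ℝ) := by nlinarith
          linarith
  have hSrepos : 0 < S.re := lt_of_lt_of_le (by positivity) hSreN
  have hS0 : S ≠ 0 := by
    intro h; rw [h] at hSrepos; simp at hSrepos
  have hSabs : ε * N ≤ ‖S‖ := hSreN.trans (Complex.re_le_norm S)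
  have habspos : 0 < ε * N := by positivity
  have bound1 : ‖S ^ (-s)‖ ≤ (ε*N) ^ (-σ) * E := by
    rw [Complex.norm_cpow_of_ne_zero hS0]
    have h1 : ‖S‖ ^ (-s).re ≤ (ε*N) ^ (-σ) := by
      have hre : (-s).re = -σ := by simp [hσ]
      rw [hre]
      exact Real.rpow_le_rpow_of_nonpos habspos hSabs (neg_nonpos.2 hσpos.le)
    have h2 : Real.exp (-(Real.pi * |s.im|)) ≤ Real.exp (Complex.arg S * (-s).im) := by
      apply Real.exp_le_exp.2
      have hπ := Complex.abs_arg_le_pi S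
      have h3 : |Complex.arg S * (-s).im| ≤ Real.pi * |s.im| := by
        rw [abs_mul]
        have h4 : |(-s).im| = |s.im| := by simp
        rw [h4]
        exact mul_le_mul_of_nonneg_right hπ (abs_nonneg _)
      linarith [abs_le.1 h3, neg_abs_le (Complex.arg S * (-s).im)]
    calc ‖S‖ ^ (-s).re / Real.exp (Complex.arg S * (-s).im)
        ≤ ‖S‖ ^ (-s).re / Real.exp (-(Real.pi * |s.im|)) := by
          apply div_le_div_of_nonneg_left _ (Real.exp_pos _) h2
          exact Real.rpow_nonneg (norm_nonneg _) _
      _ = ‖S‖ ^ (-s).re * E := by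
          rw [Real.exp_neg, div_eq_mul_inv, inv_inv, hEdef]
      _ ≤ (ε*N) ^ (-σ) * E := mul_le_mul_of_nonneg_right h1 hEpos.le
  have bound2 : ∀ p, ‖(n p:ℂ) + d p‖ ≤ A * ((n p:ℝ)+1) := by
    intro p
    calc ‖(n p:ℂ) + d p‖
        ≤ ‖((n p : ℕ) : ℂ)‖ + ‖d p‖ := norm_add_le _ _
      _ = (n p:ℝ) + ‖d p‖ := by rw [Complex.norm_natCast]
      _ ≤ A * ((n p:ℝ)+1) := by
          nlinarith [hAle p, norm_nonneg (d p),
            (Nat.cast_nonneg (n p) : (0:ℝ) ≤ (n p:ℝ)), hA1]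
  have hnorm : ‖(∏ p, ((n p:ℂ) + d p) ^ (R p)) * (∑ p, ((c p : ℝ) : ℂ) * ((n p : ℂ) + d p)) ^ (-s)‖
      = (∏ p, ‖(n p:ℂ) + d p‖ ^ (R p)) * ‖S ^ (-s)‖ := by
    rw [← hSdef, norm_mul, norm_prod]
    simp
  have bound3 : ∏ p, ‖(n p:ℂ) + d p‖ ^ (R p)
      ≤ A ^ Rs * ∏ p, ((n p:ℝ)+1) ^ (R p) := by
    calc ∏ p, ‖(n p:ℂ) + d p‖ ^ (R p)
        ≤ ∏ p, (A * ((n p:ℝ)+1)) ^ (R p) := by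
          refine Finset.prod_le_prod (fun p _ => by positivity) (fun p _ => ?_)
          exact pow_le_pow_left₀ (norm_nonneg _) (bound2 p) _
      _ = (∏ p, A ^ (R p)) * ∏ p, ((n p:ℝ)+1) ^ (R p) := by
          rw [← Finset.prod_mul_distrib]
          exact Finset.prod_congr rfl fun p _ => mul_pow _ _ _
      _ = A ^ Rs * ∏ p, ((n p:ℝ)+1) ^ (R p) := by
          rw [Finset.prod_pow_eq_pow_sum, hRs]
  have bound4 : ∏ p, ((n p:ℝ)+1) ^ (R p) ≤ N ^ Rs := by
    calc ∏ p, ((n p:ℝ)+1) ^ (R p) ≤ ∏ p, N ^ (R p) := by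
          refine Finset.prod_le_prod (fun p _ => by positivity) (fun p _ => ?_)
          exact pow_le_pow_left₀ (hxp p).le (hN1 p) _
      _ = N ^ Rs := by rw [Finset.prod_pow_eq_pow_sum, hRs]
  have bound5 : N ^ (-t) ≤ ∏ p, g (n p) := by
    have h6 : ∏ p, ((n p:ℝ)+1) ^ q ≤ N ^ t := by
      calc ∏ p, ((n p:ℝ)+1) ^ q ≤ ∏ p, N ^ q :=
            Finset.prod_le_prod (fun p _ => Real.rpow_nonneg (hxp p).le _)
              (fun p _ => Real.rpow_le_rpow (hxp p).le (hN1 p) hq0)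
        _ = (N ^ q) ^ (P:ℕ) := by rw [Finset.prod_const, card_univ, Fintype.card_fin]
        _ = N ^ t := by
            rw [← Real.rpow_natCast (N ^ q) P, ← Real.rpow_mul hNpos.le, hqP]
    have hprodpos : 0 < ∏ p, ((n p:ℝ)+1) ^ q :=
      Finset.prod_pos fun p _ => Real.rpow_pos_of_pos (hxp p) _
    have h7 : (N ^ t)⁻¹ ≤ (∏ p, ((n p:ℝ)+1) ^ q)⁻¹ := inv_anti₀ hprodpos h6
    have h8 : ∏ p, g (n p) = (∏ p, ((n p:ℝ)+1) ^ q)⁻¹ := by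
      rw [← Finset.prod_inv_distrib]
      refine Finset.prod_congr rfl fun p _ => ?_
      rw [hgdef]
      exact Real.rpow_neg (hxp p).le _
    rw [h8, Real.rpow_neg hNpos.le]
    exact h7
  calc ‖(∏ p, ((n p:ℂ) + d p) ^ (R p)) * (∑ p, ((c p : ℝ) : ℂ) * ((n p : ℂ) + d p)) ^ (-s)‖
      = (∏ p, ‖(n p:ℂ) + d p‖ ^ (R p)) * ‖S ^ (-s)‖ := hnorm
    _ ≤ (A ^ Rs * N ^ Rs) * ((ε*N) ^ (-σ) * E) := by
        refine mul_le_mul ?_ bound1 (norm_nonneg _) (by positivity)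
        exact bound3.trans (mul_le_mul_of_nonneg_left bound4 (by positivity))
    _ = C * N ^ (-t) := by
        rw [Real.mul_rpow hεpos.le hNpos.le, hCdef, ← Real.rpow_natCast N Rs]
        rw [show (-t) = (Rs:ℝ) + (-σ) by rw [ht]; ring, Real.rpow_add hNpos]
        ring
    _ ≤ C * ∏ p, g (n p) := mul_le_mul_of_nonneg_left bound5 hC0

def myModDivEquiv {P : ℕ} (β : Fin P → ℕ) (hβ : ∀ p, 0 < β p) :
    ((∀ p, Fin (β p)) × (Fin P → ℕ)) ≃ (Fin P → ℕ) where
  toFun x := fun p => β p * x.2 p + (x.1 p : ℕ)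
  invFun n := (fun p => ⟨n p % β p, Nat.mod_lt _ (hβ p)⟩, fun p => n p / β p)
  left_inv := fun ⟨k, m⟩ => by
    refine Prod.ext (funext fun p => ?_) (funext fun p => ?_)
    · apply Fin.ext
      simp [Nat.mul_add_mod, Nat.mod_eq_of_lt (k p).isLt]
    · simp [Nat.mul_add_div (hβ p), Nat.div_eq_of_lt (k p).isLt]
  right_inv := fun n => by
    funext p
    simpa [Nat.mul_comm] using Nat.div_add_mod (n p) (β p)

lemma my_reindex {P : ℕ} (β : Fin P → ℕ) (T : (Fin P → ℕ) → ℂ) :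
    ∑ k ∈ Fintype.piFinset (fun p => Finset.range (β p)), T k
      = ∑ k : ∀ p, Fin (β p), T (fun p => (k p : ℕ)) := by
  refine Finset.sum_bij'
    (fun k hk => fun p => (⟨k p, by simpa using (Fintype.mem_piFinset.1 hk p)⟩ : Fin (β p)))
    (fun k _ => fun p => (k p : ℕ)) (fun k hk => mem_univ _)
    (fun k _ => Fintype.mem_piFinset.2 fun p => mem_range.2 (k p).isLt)
    (fun k hk => rfl) (fun k hk => rfl) (fun k hk => rfl)

lemma my_tsum_split {α : Type*} [Fintype α] {γ : Type*} (e : (α × γ) ≃ γ) (F : γ → ℂ)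
    (hF : Summable F) :
    ∑' n, F n = ∑ k : α, ∑' m, F (e (k, m)) := by
  have hsum2 : Summable (F ∘ e) := e.summable_iff.2 hF
  have hinner : ∀ k : α, Summable fun m => F (e (k, m)) := by
    intro k
    exact hsum2.comp_injective (fun m₁ m₂ h => by simpa using congrArg Prod.snd h)
  rw [← e.tsum_eq F]
  rw [show (fun c : α × γ => F (e c)) = F ∘ e from rfl]
  rw [Summable.tsum_prod' hsum2 hinner, tsum_fintype]
  rfl

lemma my_barnes_key (P : ℕ) (hP : 1 ≤ P) (R : Fin P → ℕ) (d : Fin P → ℂ)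
    (a b β : Fin P → ℕ) (hβpos : ∀ p, 0 < β p)
    (w : ℚ) (hW : (0:ℝ) < (w:ℝ))
    (hkeyC : ∀ p, ((a p : ℂ) / (b p : ℂ)) * (β p : ℂ) = (w : ℂ))
    (hδre : ∀ (k : Fin P → ℕ) (p : Fin P), 0 < ((d p + (k p : ℂ)) / (β p : ℂ)).re)
    (s : ℂ) (k : ∀ p, Fin (β p)) (m : Fin P → ℕ) :
    (∏ p, ((((β p * m p + (k p : ℕ) : ℕ)) : ℂ) + d p) ^ (R p)) *
      (∑ p, ((a p:ℂ)/(b p:ℂ)) * ((((β p * m p + (k p : ℕ) : ℕ)) : ℂ) + d p)) ^ (-s)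
    = (w:ℂ)^(-s) * (∏ p, (β p:ℂ) ^ (R p)) *
      ((∏ p, ((m p:ℂ) + (d p + ((k p : ℕ):ℂ))/(β p:ℂ)) ^ (R p)) *
        (∑ p, ((m p:ℂ) + (d p + ((k p : ℕ):ℂ))/(β p:ℂ))) ^ (-s)) := by
  have hPfin : Nonempty (Fin P) := Fin.pos_iff_nonempty.1 hP
  have hPn : (univ : Finset (Fin P)).Nonempty := univ_nonempty
  have hβC : ∀ p, (β p : ℂ) ≠ 0 := fun p => by exact_mod_cast (hβpos p).ne'
  have h1 : ∀ p, (((β p * m p + (k p : ℕ) : ℕ)) : ℂ) + d p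
      = (β p:ℂ) * ((m p:ℂ) + (d p + ((k p : ℕ):ℂ))/(β p:ℂ)) := by
    intro p
    have := hβC p
    push_cast
    field_simp
    ring
  have hZre : 0 < (∑ p, ((m p:ℂ) + (d p + ((k p : ℕ):ℂ))/(β p:ℂ))).re := by
    rw [Complex.re_sum]
    refine sum_pos (fun p _ => ?_) hPn
    have h2 := hδre (fun p => (k p : ℕ)) p
    simp only [Complex.add_re, Complex.natCast_re]
    have : (0:ℝ) ≤ (m p : ℝ) := Nat.cast_nonneg _
    linarith
  have hZ0 : (∑ p, ((m p:ℂ) + (d p + ((k p : ℕ):ℂ))/(β p:ℂ))) ≠ 0 := by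
    intro h
    rw [h] at hZre
    simp at hZre
  have h2 : ∑ p, ((a p:ℂ)/(b p:ℂ)) * ((((β p * m p + (k p : ℕ) : ℕ)) : ℂ) + d p)
      = (w:ℂ) * ∑ p, ((m p:ℂ) + (d p + ((k p : ℕ):ℂ))/(β p:ℂ)) := by
    rw [Finset.mul_sum]
    refine Finset.sum_congr rfl fun p _ => ?_
    rw [h1 p, ← mul_assoc, hkeyC p]
  have h3 : ((w:ℂ) * ∑ p, ((m p:ℂ) + (d p + ((k p : ℕ):ℂ))/(β p:ℂ))) ^ (-s)
      = (w:ℂ)^(-s) * (∑ p, ((m p:ℂ) + (d p + ((k p : ℕ):ℂ))/(β p:ℂ))) ^ (-s) := by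
    rw [show (w:ℂ) = (((w:ℝ)):ℂ) by push_cast; rfl]
    exact my_ofReal_mul_cpow hW hZ0 (-s)
  have h4 : ∏ p, ((((β p * m p + (k p : ℕ) : ℕ)) : ℂ) + d p) ^ (R p)
      = (∏ p, (β p:ℂ) ^ (R p)) * ∏ p, ((m p:ℂ) + (d p + ((k p : ℕ):ℂ))/(β p:ℂ)) ^ (R p) := by
    rw [← Finset.prod_mul_distrib]
    exact Finset.prod_congr rfl fun p _ => by rw [h1 p, mul_pow]
  rw [h4, h2, h3]
  ring

/-- Reduction of the generalized Barnes zeta function with positive rational coefficients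
`w_p = a_p / b_p` (`a_p, b_p` coprime positive integers) to the all-ones case.
With `w = lcm(a_1,…,a_P)/gcd(b_1,…,b_P)` and `β_p = w / w_p` (a positive integer), for `Re s`
large:
`ζ^B(R,s,d|w) = w^{-s} ∏_p β_p^{R_p} Σ_{0 ≤ k_p ≤ β_p - 1}
  ζ^B(R,s,((d_p+k_p)/β_p)_p | 1,…,1)`. -/
theorem generalized_barnes_zeta_rational_reduction (P : ℕ) (hP : 1 ≤ P)
    (R : Fin P → ℕ) (d : Fin P → ℂ) (hd : ∀ p, 0 < (d p).re)
    (a b : Fin P → ℕ) (ha : ∀ p, 0 < a p) (hb : ∀ p, 0 < b p)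
    (hab : ∀ p, Nat.Coprime (a p) (b p))
    (w : ℚ) (hw : w = ((Finset.univ.lcm a : ℕ) : ℚ) / ((Finset.univ.gcd b : ℕ) : ℚ))
    (β : Fin P → ℕ) (hβ : ∀ p, ((β p : ℚ)) = w / ((a p : ℚ) / (b p : ℚ)))
    (s : ℂ) (hs : ((∑ p, R p : ℕ) : ℝ) + P < s.re) :
    (∑' n : Fin P → ℕ,
        (∏ p, ((n p : ℂ) + d p) ^ (R p)) *
          (∑ p, ((a p : ℂ) / (b p : ℂ)) * ((n p : ℂ) + d p)) ^ (-s))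
    = ((w : ℂ)) ^ (-s) * (∏ p, ((β p : ℂ)) ^ (R p)) *
        ∑ k ∈ Fintype.piFinset (fun p => Finset.range (β p)),
          ∑' n : Fin P → ℕ,
            (∏ p, ((n p : ℂ) + (d p + (k p : ℂ)) / (β p : ℂ)) ^ (R p)) *
              (∑ p, ((n p : ℂ) + (d p + (k p : ℂ)) / (β p : ℂ))) ^ (-s) := by
  have hPfin : Nonempty (Fin P) := Fin.pos_iff_nonempty.1 hP
  have hPn : (univ : Finset (Fin P)).Nonempty := univ_nonempty
  have hlcm : 0 < (univ.lcm a : ℕ) := by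
    rcases Nat.eq_zero_or_pos (univ.lcm a) with h | h
    · exfalso
      rw [Finset.lcm_eq_zero_iff] at h
      obtain ⟨p, -, hp⟩ := h
      exact (ha p).ne' hp
    · exact h
  have hgcd : 0 < (univ.gcd b : ℕ) := by
    rcases Nat.eq_zero_or_pos (univ.gcd b) with h | h
    · exfalso
      rw [Finset.gcd_eq_zero_iff] at h
      obtain ⟨p⟩ := hPfin
      exact (hb p).ne' (h p (mem_univ p))
    · exact h
  have hwpos : (0:ℚ) < w := by
    rw [hw]
    have h1 : (0:ℚ) < (univ.lcm a : ℕ) := by exact_mod_cast hlcm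
    have h2 : (0:ℚ) < (univ.gcd b : ℕ) := by exact_mod_cast hgcd
    positivity
  have haQ : ∀ p, (0:ℚ) < (a p : ℚ) := fun p => by exact_mod_cast ha p
  have hbQ : ∀ p, (0:ℚ) < (b p : ℚ) := fun p => by exact_mod_cast hb p
  have hβQ : ∀ p, (0:ℚ) < (β p : ℚ) := fun p => by
    have h1 := haQ p; have h2 := hbQ p
    rw [hβ p]; positivity
  have hβpos : ∀ p, 0 < β p := fun p => by exact_mod_cast hβQ p
  have hkeyQ : ∀ p, ((a p : ℚ) / (b p : ℚ)) * (β p : ℚ) = w := fun p => by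
    have h1 := haQ p; have h2 := hbQ p
    have hne : (a p:ℚ)/(b p:ℚ) ≠ 0 := by positivity
    rw [hβ p, mul_comm]
    exact div_mul_cancel₀ w hne
  have hkeyC : ∀ p, ((a p : ℂ) / (b p : ℂ)) * (β p : ℂ) = (w : ℂ) := fun p => by
    have := congrArg (fun q : ℚ => (q : ℂ)) (hkeyQ p)
    push_cast at this
    exact this
  have hW : (0:ℝ) < (w:ℝ) := by exact_mod_cast hwpos
  have hδre : ∀ (k : Fin P → ℕ) (p : Fin P), 0 < ((d p + (k p : ℂ)) / (β p : ℂ)).re := by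
    intro k p
    have h1 : (d p + (k p : ℂ)) / (β p : ℂ) = (((β p : ℝ)⁻¹ : ℝ) : ℂ) * (d p + (k p : ℂ)) := by
      push_cast
      rw [div_eq_inv_mul]
    rw [h1, Complex.re_ofReal_mul]
    have h2 : 0 < ((β p : ℝ))⁻¹ := by
      have : (0:ℝ) < β p := by exact_mod_cast hβpos p
      positivity
    have h3 : 0 < (d p + (k p : ℂ)).re := by
      simp only [Complex.add_re, Complex.natCast_re]
      have : (0:ℝ) ≤ (k p : ℝ) := Nat.cast_nonneg _
      linarith [hd p]
    positivity
  -- summability of the left-hand side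
  have hsummable : Summable (fun n : Fin P → ℕ =>
      (∏ p, ((n p : ℂ) + d p) ^ (R p)) *
        (∑ p, ((a p : ℂ) / (b p : ℂ)) * ((n p : ℂ) + d p)) ^ (-s)) := by
    have hpos : ∀ p, 0 < (a p : ℝ) / (b p : ℝ) := fun p => by
      have h1 : (0:ℝ) < a p := by exact_mod_cast ha p
      have h2 : (0:ℝ) < b p := by exact_mod_cast hb p
      positivity
    refine (my_barnes_summable P hP R (fun p => (a p : ℝ)/(b p : ℝ)) hpos d hd s hs).congr
      fun n => ?_
    have hc : ∀ p, ((((a p : ℝ)/(b p : ℝ)) : ℝ) : ℂ) = (a p : ℂ)/(b p : ℂ) := fun p => by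
      push_cast
      rfl
    simp only [hc]
  obtain ⟨e, he⟩ : ∃ e : ((∀ p, Fin (β p)) × (Fin P → ℕ)) ≃ (Fin P → ℕ),
      ∀ x, e x = fun p => β p * x.2 p + (x.1 p : ℕ) :=
    ⟨myModDivEquiv β hβpos, fun x => rfl⟩
  calc (∑' n : Fin P → ℕ,
        (∏ p, ((n p : ℂ) + d p) ^ (R p)) *
          (∑ p, ((a p : ℂ) / (b p : ℂ)) * ((n p : ℂ) + d p)) ^ (-s))
      = ∑ k : ∀ p, Fin (β p), ∑' m : Fin P → ℕ,
          (∏ p, (((e (k, m)) p : ℂ) + d p) ^ (R p)) *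
            (∑ p, ((a p : ℂ) / (b p : ℂ)) * (((e (k, m)) p : ℂ) + d p)) ^ (-s) :=
        my_tsum_split e _ hsummable
    _ = ∑ k : ∀ p, Fin (β p), ((w:ℂ)^(-s) * (∏ p, (β p:ℂ) ^ (R p)) *
          ∑' m : Fin P → ℕ,
            (∏ p, ((m p:ℂ) + (d p + ((k p : ℕ):ℂ))/(β p:ℂ)) ^ (R p)) *
              (∑ p, ((m p:ℂ) + (d p + ((k p : ℕ):ℂ))/(β p:ℂ))) ^ (-s)) := by
        refine Finset.sum_congr rfl fun k _ => ?_
        rw [← tsum_mul_left]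
        refine tsum_congr fun m => ?_
        rw [he (k, m)]
        exact my_barnes_key P hP R d a b β hβpos w hW hkeyC hδre s k m
    _ = (w:ℂ)^(-s) * (∏ p, (β p:ℂ) ^ (R p)) *
          ∑ k : ∀ p, Fin (β p), ∑' m : Fin P → ℕ,
            (∏ p, ((m p:ℂ) + (d p + ((k p : ℕ):ℂ))/(β p:ℂ)) ^ (R p)) *
              (∑ p, ((m p:ℂ) + (d p + ((k p : ℕ):ℂ))/(β p:ℂ))) ^ (-s) := by
        rw [← Finset.mul_sum]
    _ = ((w : ℂ)) ^ (-s) * (∏ p, ((β p : ℂ)) ^ (R p)) *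
        ∑ k ∈ Fintype.piFinset (fun p => Finset.range (β p)),
          ∑' n : Fin P → ℕ,
            (∏ p, ((n p : ℂ) + (d p + (k p : ℂ)) / (β p : ℂ)) ^ (R p)) *
              (∑ p, ((n p : ℂ) + (d p + (k p : ℂ)) / (β p : ℂ))) ^ (-s) := by
        rw [my_reindex β (fun k => ∑' n : Fin P → ℕ,
            (∏ p, ((n p : ℂ) + (d p + (k p : ℂ)) / (β p : ℂ)) ^ (R p)) *
              (∑ p, ((n p : ℂ) + (d p + (k p : ℂ)) / (β p : ℂ))) ^ (-s))]
end
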